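/- Let N ≥ 8 and (p,q) on the critical hyperbola with 1 < p < (N-1)/(N-2), and define A = N(p+1)q/(q+1) - (N+2)/2 - 1 - θ + (N-2)(p-1) for θ > 0 small. Then Ap > Npq/(q+1) for all sufficiently small θ. -/

import Mathlib

/-- For N ≥ 8 and (p,q) on the critical hyperbola with 1 < p < (N-1)/(N-2),
letting A(θ) = N(p+1)q/(q+1) - (N+2)/2 - 1 - θ + (N-2)(p-1), one has
A(θ)·p > Npq/(q+1) for all sufficiently small θ > 0. -/
theorem stmt16 (N : ℕ) (hN : 8 ≤ N) (p q : ℝ) (hq0 : 0 < q)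
    (hp1 : 1 < p) (hp2 : p < ((N : ℝ) - 1) / ((N : ℝ) - 2))
    (hcrit : 1 / (p + 1) + 1 / (q + 1) = ((N : ℝ) - 2) / N)
    (A : ℝ → ℝ)
    (hA : ∀ θ, A θ = (N : ℝ) * (p + 1) * q / (q + 1) - ((N : ℝ) + 2) / 2 - 1 - θ
      + ((N : ℝ) - 2) * (p - 1)) :
    ∃ θ₀ > (0 : ℝ), ∀ θ : ℝ, 0 < θ → θ < θ₀ →
      (N : ℝ) * p * q / (q + 1) < A θ * p := by
  have hNR : (8 : ℝ) ≤ (N : ℝ) := by exact_mod_cast hN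
  have hN0 : (0 : ℝ) < N := by linarith
  have hq1 : (0 : ℝ) < q + 1 := by linarith
  have hp0 : (0 : ℝ) < p := by linarith
  have hp1' : (0 : ℝ) < p + 1 := by linarith
  have hkey : q / (q + 1) = 2 / (N : ℝ) + 1 / (p + 1) := by
    have h1 : 1 / (q + 1) = ((N : ℝ) - 2) / N - 1 / (p + 1) := by linarith
    have h2 : q / (q + 1) = 1 - 1 / (q + 1) := by field_simp; ring
    rw [h2, h1]
    field_simp
    ring
  have e1 : (N : ℝ) * (p + 1) * q / (q + 1) = 2 * (p + 1) + N := by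
    rw [mul_div_assoc, hkey]
    field_simp
  have e2 : (N : ℝ) * p * q / (q + 1) = 2 * p + N * p / (p + 1) := by
    rw [mul_div_assoc, hkey]
    field_simp
  have h0 : (N : ℝ) * p * q / (q + 1) < A 0 * p := by
    rw [hA 0, e1, e2]
    have hdiv : (N : ℝ) * p / (p + 1) < ((N : ℝ) * p - N / 2) * p := by
      rw [div_lt_iff₀ hp1']
      nlinarith [mul_pos (mul_pos (mul_pos hN0 hp0) (by linarith : (0:ℝ) < p - 1))
        (by linarith : (0:ℝ) < p + 3/2)]
    have hstep : 2 * p + ((N : ℝ) * p - N / 2) * p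
        = (2 * (p + 1) + (N : ℝ) - ((N : ℝ) + 2) / 2 - 1 - 0 + ((N : ℝ) - 2) * (p - 1)) * p := by
      ring
    linarith
  refine ⟨(A 0 * p - (N : ℝ) * p * q / (q + 1)) / p,
    div_pos (by linarith) hp0, ?_⟩
  intro θ hθ hθ'
  have hAθ : A θ * p = A 0 * p - θ * p := by rw [hA θ, hA 0]; ring
  rw [hAθ]
  have h3 : θ * p < A 0 * p - (N : ℝ) * p * q / (q + 1) :=
    (lt_div_iff₀ hp0).mp hθ'
  linarith
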